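/- arXiv:math/0610252 — 4 statements merged into one kernel-verified Lean document; each statement's English description precedes it below -/
import Mathlib

section
/- The set of smooth functions C^∞(M, Y) is dense in the space C(M, Y) of continuous functions from M to Y endowed with the compact-open topology. -/
/-!
Near each point `x`, the constant `f x` stays `ε`-close to `f`; since balls are convex, a smooth
partition of unity glues these local constants into a smooth map uniformly `ε`-close to `f`.
Uniform approximation on all of `M` is in particular approximation on compacta.
-/

open Filter
open scoped Manifold ContDiff

theorem ContinuousMap.mem_closure_of_forall_exists_dist_lt {X Y : Type*} [TopologicalSpace X]
    [PseudoMetricSpace Y] {S : Set C(X, Y)} {f : C(X, Y)}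
    (h : ∀ ε > 0, ∃ g ∈ S, ∀ x, dist (g x) (f x) < ε) : f ∈ closure S := by
  choose g hgS hg using fun n : ℕ => h (1 / (n + 1)) Nat.one_div_pos_of_nat
  have hunif : TendstoUniformly (fun n x => g n x) f atTop := by
    refine Metric.tendstoUniformly_iff.2 fun ε hε => ?_
    filter_upwards [tendsto_one_div_add_atTop_nhds_zero_nat.eventually_lt_const hε]
      with n hn x
    exact (dist_comm (f x) (g n x)).trans_lt ((hg n x).trans hn)
  exact mem_closure_of_tendsto
    (ContinuousMap.tendsto_of_tendstoLocallyUniformly hunif.tendstoLocallyUniformly)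
    (.of_forall hgS)

theorem exists_contMDiffMap_forall_dist_lt
    {E : Type*} [NormedAddCommGroup E] [NormedSpace ℝ E] [FiniteDimensional ℝ E]
    {H : Type*} [TopologicalSpace H] (I : ModelWithCorners ℝ E H)
    {M : Type*} [TopologicalSpace M] [ChartedSpace H M] [IsManifold I ∞ M]
    [SigmaCompactSpace M] [T2Space M]
    {F : Type*} [NormedAddCommGroup F] [NormedSpace ℝ F] {n : ℕ∞}
    {f : M → F} (hf : Continuous f) {ε : M → ℝ} (hε : Continuous ε) (hε₀ : ∀ x, 0 < ε x) :
    ∃ g : C^n⟮I, M; 𝓘(ℝ, F), F⟯, ∀ x, dist (g x) (f x) < ε x := by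
  refine exists_contMDiffMap_forall_mem_convex_of_local_const I
    (t := fun x => Metric.ball (f x) (ε x)) (fun x => convex_ball _ _) fun x => ⟨f x, ?_⟩
  have hdist : ContinuousAt (fun y => dist (f x) (f y)) x :=
    (continuous_const.dist hf).continuousAt
  simpa using hdist.eventually_lt hε.continuousAt (by simpa using hε₀ x)

theorem smooth_dense_in_continuous_compactOpen_general
    {EB : Type*} [NormedAddCommGroup EB] [NormedSpace ℝ EB] [FiniteDimensional ℝ EB]
    {HB : Type*} [TopologicalSpace HB] {IB : ModelWithCorners ℝ EB HB}
    {M : Type*} [TopologicalSpace M] [ChartedSpace HB M] [IsManifold IB (⊤ : ℕ∞) M]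
    [SigmaCompactSpace M] [T2Space M]
    {Y : Type*} [NormedAddCommGroup Y] [NormedSpace ℝ Y]
 :
    Dense {f : C(M, Y) | ContMDiff IB 𝓘(ℝ, Y) (⊤ : ℕ∞) (f : M → Y)} := by
  refine fun f => ContinuousMap.mem_closure_of_forall_exists_dist_lt fun ε hε => ?_
  obtain ⟨g, hg⟩ := exists_contMDiffMap_forall_dist_lt IB (n := ⊤) f.continuous continuous_const
    fun _ => hε
  exact ⟨⟨g, g.contMDiff.continuous⟩, g.contMDiff, hg⟩

/-- Smooth functions are dense in the continuous functions `C(M, Y)` with the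
compact-open topology. -/
theorem smooth_dense_in_continuous_compactOpen
    {EB : Type*} [NormedAddCommGroup EB] [NormedSpace ℝ EB] [FiniteDimensional ℝ EB]
    {HB : Type*} [TopologicalSpace HB] {IB : ModelWithCorners ℝ EB HB}
    {M : Type*} [TopologicalSpace M] [ChartedSpace HB M] [IsManifold IB (⊤ : ℕ∞) M]
    [SigmaCompactSpace M] [SecondCountableTopology M] [T2Space M]
    {Y : Type*} [NormedAddCommGroup Y] [NormedSpace ℝ Y]
 :
    Dense {f : C(M, Y) | ContMDiff IB 𝓘(ℝ, Y) (⊤ : ℕ∞) (f : M → Y)} :=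
  smooth_dense_in_continuous_compactOpen_general
end

section
/- Let W ⊆ Y be an open convex subset, let f : M → W be continuous, let L ⊆ M be closed and U ⊆ M be open such that f is smooth on an open neighbourhood of L \ U. Then every neighbourhood of f in C(M, W) with the compact-open topology contains a continuous map g : M → W which is smooth on an open neighbourhood of L and which equals f on M \ U. -/
open Filter Topology
open scoped Manifold ContDiff

/-!
Approximate `f` uniformly, within `W`, by a globally smooth `h`, by gluing local constants with
a smooth partition of unity (the constraint sets `W ∩ ball (f x) ε` are convex). Then blend
`(1 - φ) • f + φ • h` with a smooth cutoff `φ` that vanishes off `U` and equals `1` near the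
closed set `L \ A`, where `A` is the open set on which `f` is already smooth. Convexity keeps the
blend in `W`; it is smooth on `A` and near `L \ A`, agrees with `f` off `U`, and is within `ε` of
`f` everywhere, which puts it in every compact-open neighbourhood of `f` once `ε` is small.
-/

theorem ContinuousMap.exists_pos_forall_dist_lt_mem_of_mem_nhds {X α : Type*}
    [TopologicalSpace X] [PseudoMetricSpace α] {f : C(X, α)} {N : Set C(X, α)} (hN : N ∈ 𝓝 f) :
    ∃ ε > 0, ∀ g : C(X, α), (∀ x, dist (g x) (f x) < ε) → g ∈ N := by
  obtain ⟨⟨_, ε⟩, ⟨-, hε⟩, hN⟩ :=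
    (nhds_basis_uniformity' Metric.uniformity_basis_dist.compactConvergenceUniformity).mem_iff.1 hN
  exact ⟨ε, hε, fun g hg => hN fun x _ => by simpa [dist_comm] using hg x⟩

section SmoothApproximation

variable {E : Type*} [NormedAddCommGroup E] [NormedSpace ℝ E] [FiniteDimensional ℝ E]
  {H : Type*} [TopologicalSpace H] (I : ModelWithCorners ℝ E H)
  {M : Type*} [TopologicalSpace M] [ChartedSpace H M] [IsManifold I ∞ M]
  [T2Space M] [SigmaCompactSpace M]
  {F : Type*} [NormedAddCommGroup F] [NormedSpace ℝ F] {n : ℕ∞}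

theorem exists_contMDiffMap_forall_mem_dist_lt {W : Set F} (hW : Convex ℝ W) {f : M → F}
    (hf : Continuous f) (hfW : ∀ x, f x ∈ W) {ε : ℝ} (hε : 0 < ε) :
    ∃ h : C^n⟮I, M; 𝓘(ℝ, F), F⟯, ∀ x, h x ∈ W ∧ dist (h x) (f x) < ε := by
  obtain ⟨h, hh⟩ := exists_contMDiffMap_forall_mem_convex_of_local_const (n := n) I
    (t := fun x => W ∩ Metric.ball (f x) ε) (fun x => hW.inter (convex_ball _ _)) fun x =>
      ⟨f x, (hf.continuousAt.eventually (Metric.ball_mem_nhds _ hε)).mono fun y hy =>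
        ⟨hfW x, Metric.mem_ball_comm.1 hy⟩⟩
  exact ⟨h, hh⟩

variable {I}

theorem exists_relative_contMDiff_approx {W : Set F} (hW : Convex ℝ W) {f : M → F}
    (hf : Continuous f) (hfW : ∀ x, f x ∈ W) {L U A : Set M} (hL : IsClosed L) (hU : IsOpen U)
    (hA : IsOpen A) (hLA : L \ U ⊆ A) (hfA : ContMDiffOn I 𝓘(ℝ, F) n f A) {ε : ℝ}
    (hε : 0 < ε) :
    ∃ g : M → F, Continuous g ∧ (∀ x, g x ∈ W) ∧ (∀ x, dist (g x) (f x) < ε) ∧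
      (∃ V, IsOpen V ∧ L ⊆ V ∧ ContMDiffOn I 𝓘(ℝ, F) n g V) ∧ ∀ x ∉ U, g x = f x := by
  obtain ⟨h, hh⟩ := exists_contMDiffMap_forall_mem_dist_lt I (n := n) hW hf hfW hε
  -- local compactness makes the σ-compact Hausdorff manifold `M` normal, as the cutoff requires
  have : LocallyCompactSpace H := I.locallyCompactSpace
  have : LocallyCompactSpace M := ChartedSpace.locallyCompactSpace H M
  have hLAU : L \ A ⊆ interior U := by
    rw [hU.interior_eq]
    exact fun x hx => by_contra fun hxU => hx.2 (hLA ⟨hx.1, hxU⟩)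
  obtain ⟨φ, hφ1, hφ0, hφ01⟩ :=
    exists_contMDiffMap_one_nhds_of_subset_interior I (n := n) (hL.sdiff hA) hLAU
  obtain ⟨O, hO, hLAO, hφ1⟩ := mem_nhdsSet_iff_exists.1 hφ1
  have hg_dist : ∀ x, dist ((1 - φ x) • f x + φ x • h x) (f x) ≤ dist (h x) (f x) := fun x => by
    have hdiff : (1 - φ x) • f x + φ x • h x - f x = φ x • (h x - f x) := by module
    rw [dist_eq_norm, dist_eq_norm, hdiff, norm_smul, Real.norm_eq_abs, abs_of_nonneg (hφ01 x).1]
    exact mul_le_of_le_one_left (norm_nonneg _) (hφ01 x).2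
  set g : M → F := fun x => (1 - φ x) • f x + φ x • h x with hg
  have hg_smooth : ContMDiffOn I 𝓘(ℝ, F) n g (A ∪ O) := by
    rintro x (hxA | hxO)
    · have hfx := hfA.contMDiffAt (hA.mem_nhds hxA)
      exact (((contMDiffAt_const.sub (φ.contMDiff x)).smul hfx).add
        ((φ.contMDiff x).smul (h.contMDiff x))).contMDiffWithinAt
    · have hgh : g =ᶠ[𝓝 x] h := eventually_of_mem (hO.mem_nhds hxO) fun y hy => by
        simp [hg, show φ y = 1 from hφ1 hy]
      exact ((h.contMDiff x).congr_of_eventuallyEq hgh).contMDiffWithinAt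
  refine ⟨g, by fun_prop, fun x => ?_, fun x => (hg_dist x).trans_lt (hh x).2,
    ⟨A ∪ O, hA.union hO, fun x hx => ?_, hg_smooth⟩, fun x hx => by simp [hg, hφ0 x hx]⟩
  · exact hW (hfW x) (hh x).1 (sub_nonneg.2 (hφ01 x).2) (hφ01 x).1 (sub_add_cancel 1 _)
  · by_cases hxA : x ∈ A
    exacts [Or.inl hxA, Or.inr (hLAO ⟨hx, hxA⟩)]

end SmoothApproximation

theorem smooth_relative_approx_convex_general
    {EB : Type*} [NormedAddCommGroup EB] [NormedSpace ℝ EB] [FiniteDimensional ℝ EB]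
    {HB : Type*} [TopologicalSpace HB] {IB : ModelWithCorners ℝ EB HB}
    {M : Type*} [TopologicalSpace M] [ChartedSpace HB M] [IsManifold IB (⊤ : ℕ∞) M]
    [SigmaCompactSpace M] [T2Space M]
    {Y : Type*} [NormedAddCommGroup Y] [NormedSpace ℝ Y]
    {W : Set Y} (hWconv : Convex ℝ W)
    (f : C(M, W))
    {L : Set M} (hL : IsClosed L) {U : Set M} (hU : IsOpen U)
    (hfsm : ∃ A : Set M, IsOpen A ∧ L \ U ⊆ A ∧
      ContMDiffOn IB 𝓘(ℝ, Y) (⊤ : ℕ∞) (fun x => (f x : Y)) A) :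
    ∀ Nf ∈ nhds f, ∃ g : C(M, W), g ∈ Nf ∧
      (∃ V : Set M, IsOpen V ∧ L ⊆ V ∧ ContMDiffOn IB 𝓘(ℝ, Y) (⊤ : ℕ∞) (fun x => (g x : Y)) V) ∧
      (∀ x, x ∉ U → g x = f x) := by
  intro Nf hNf
  obtain ⟨A, hA, hLA, hfA⟩ := hfsm
  obtain ⟨ε, hε, hεN⟩ := ContinuousMap.exists_pos_forall_dist_lt_mem_of_mem_nhds hNf
  obtain ⟨g, hg, hgW, hgf, hg_smooth, hgU⟩ := exists_relative_contMDiff_approx hWconv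
    (by fun_prop) (fun x => (f x).2) hL hU hA hLA hfA hε
  exact ⟨⟨fun x => ⟨g x, hgW x⟩, by fun_prop⟩, hεN _ hgf, hg_smooth,
    fun x hx => Subtype.ext (hgU x hx)⟩

/-- Relative smoothing for maps into an open convex subset `W` of a normed space:
any neighbourhood of `f` in `C(M, W)` (compact-open topology) contains a map that is smooth
on a neighbourhood of `L` and agrees with `f` off `U`. -/
theorem smooth_relative_approx_convex
    {EB : Type*} [NormedAddCommGroup EB] [NormedSpace ℝ EB] [FiniteDimensional ℝ EB]
    {HB : Type*} [TopologicalSpace HB] {IB : ModelWithCorners ℝ EB HB}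
    {M : Type*} [TopologicalSpace M] [ChartedSpace HB M] [IsManifold IB (⊤ : ℕ∞) M]
    [SigmaCompactSpace M] [SecondCountableTopology M] [T2Space M]
    {Y : Type*} [NormedAddCommGroup Y] [NormedSpace ℝ Y]
    {W : Set Y} (hWopen : IsOpen W) (hWconv : Convex ℝ W)
    (f : C(M, W))
    {L : Set M} (hL : IsClosed L) {U : Set M} (hU : IsOpen U)
    (hfsm : ∃ A : Set M, IsOpen A ∧ L \ U ⊆ A ∧
      ContMDiffOn IB 𝓘(ℝ, Y) (⊤ : ℕ∞) (fun x => (f x : Y)) A) :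
    ∀ Nf ∈ nhds f, ∃ g : C(M, W), g ∈ Nf ∧
      (∃ V : Set M, IsOpen V ∧ L ⊆ V ∧ ContMDiffOn IB 𝓘(ℝ, Y) (⊤ : ℕ∞) (fun x => (g x : Y)) V) ∧
      (∀ x, x ∉ U → g x = f x) :=
  smooth_relative_approx_convex_general hWconv f hL hU hfsm
end

section
/- Let W ⊆ N be an open subset which is diffeomorphic to an open convex subset of the modelling space of N, let f : M → W be continuous, let L ⊆ M be closed and U ⊆ M be open such that f is smooth on an open neighbourhood of L \ U. Then every neighbourhood of f in C(M, W) with the compact-open topology contains a continuous map g : M → W which is smooth on an open neighbourhood of L and which equals f on M \ U. -/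
/-!
Through the chart, `f` becomes a continuous map `u` into the convex set `C`, smooth on `A ⊇ L \ U`.
Since `C` is convex, a partition of unity glues constants into smooth maps `h` with values in `C`
uniformly close to `u`. Interpolating along a cutoff `χ` that is `1` near `L \ A` and `0` off `U`
gives `(1 - χ) • u + χ • h` in `C`: it is smooth on `A` and near `L \ A`, equals `u` off `U`, and
tends to `u` uniformly, hence in the compact-open topology, as `h → u`. Composition with the inverse
chart is continuous for the compact-open topology, so this carries back to `W`.
-/

open Set Filter Topology
open scoped Manifold ContDiff

theorem ContinuousMap.tendsto_of_forall_dist_lt {ι X Y : Type*} [TopologicalSpace X]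
    [PseudoMetricSpace Y] {p : Filter ι} {F : ι → C(X, Y)} {f : C(X, Y)} {ε : ι → ℝ}
    (hε : Tendsto ε p (𝓝 0)) (hF : ∀ i x, dist (F i x) (f x) < ε i) : Tendsto F p (𝓝 f) := by
  refine ContinuousMap.tendsto_of_tendstoLocallyUniformly
    (Metric.tendstoUniformly_iff.2 fun δ hδ => ?_).tendstoLocallyUniformly
  filter_upwards [hε.eventually (gt_mem_nhds hδ)] with i hi x
  exact (dist_comm (f x) (F i x)).trans_lt ((hF i x).trans hi)

theorem ContMDiffOn.lineMap {E H M F : Type*} [NormedAddCommGroup E] [NormedSpace ℝ E]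
    [TopologicalSpace H] {I : ModelWithCorners ℝ E H} [TopologicalSpace M] [ChartedSpace H M]
    [NormedAddCommGroup F] [NormedSpace ℝ F] {n : ℕ∞} {s : Set M} {a b : M → F} {t : M → ℝ}
    (ha : ContMDiffOn I 𝓘(ℝ, F) n a s) (hb : ContMDiffOn I 𝓘(ℝ, F) n b s)
    (ht : ContMDiffOn I 𝓘(ℝ) n t s) :
    ContMDiffOn I 𝓘(ℝ, F) n (fun x => AffineMap.lineMap (a x) (b x) (t x)) s := by
  simp only [AffineMap.lineMap_apply_module']
  exact (ht.smul (hb.sub ha)).add ha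

section

variable {E H M F : Type*} [NormedAddCommGroup E] [NormedSpace ℝ E] [FiniteDimensional ℝ E]
  [TopologicalSpace H] {I : ModelWithCorners ℝ E H} [TopologicalSpace M] [ChartedSpace H M]
  [IsManifold I ∞ M] [T2Space M] [SigmaCompactSpace M]
  [NormedAddCommGroup F] [NormedSpace ℝ F] {n : ℕ∞} {C : Set F}

theorem exists_contMDiffMap_mem_convex_dist_lt (hC : Convex ℝ C) (u : C(M, C)) {ε : ℝ}
    (hε : 0 < ε) : ∃ h : C^n⟮I, M; 𝓘(ℝ, F), F⟯, ∀ x, h x ∈ C ∧ dist (h x) (u x) < ε := by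
  refine exists_contMDiffMap_forall_mem_convex_of_local_const I
    (t := fun x => C ∩ Metric.ball (u x : F) ε) (fun x => hC.inter (convex_ball _ _))
    fun x => ⟨u x, ?_⟩
  have hu : Continuous fun y => (u y : F) := continuous_subtype_val.comp u.continuous
  filter_upwards [hu.continuousAt (Metric.ball_mem_nhds _ hε)] with y hy
  exact ⟨(u x).2, Metric.mem_ball_comm.1 hy⟩

theorem exists_seq_tendsto_contMDiffOn_nhds_eq_off_of_convex (hC : Convex ℝ C) (u : C(M, C))
    {L U A : Set M} (hL : IsClosed L) (hU : IsOpen U) (hA : IsOpen A) (hLAU : L \ A ⊆ U)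
    (huA : ContMDiffOn I 𝓘(ℝ, F) n (fun x => (u x : F)) A) :
    ∃ g : ℕ → C(M, C), Tendsto g atTop (𝓝 u) ∧
      (∃ V, IsOpen V ∧ L ⊆ V ∧ ∀ k, ContMDiffOn I 𝓘(ℝ, F) n (fun x => (g k x : F)) V) ∧
      ∀ k x, x ∉ U → g k x = u x := by
  -- local compactness makes `M` a normal space, as the cutoff lemma requires
  have := I.locallyCompactSpace
  have := ChartedSpace.locallyCompactSpace H M
  obtain ⟨χ, hχ1, hχ0, hχ01⟩ := exists_contMDiffMap_one_nhds_of_subset_interior I (n := n)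
    (hL.sdiff hA) (hU.interior_eq.symm ▸ hLAU)
  obtain ⟨O, hO, hLAO, hχO⟩ := eventually_nhdsSet_iff_exists.1 hχ1
  choose h hhC hhu using fun k : ℕ =>
    exists_contMDiffMap_mem_convex_dist_lt (I := I) (n := n) hC u (Nat.one_div_pos_of_nat (n := k))
  have hu : Continuous fun x => (u x : F) := continuous_subtype_val.comp u.continuous
  let g : ℕ → C(M, C) := fun k =>
    { toFun x := ⟨AffineMap.lineMap (u x : F) (h k x) (χ x),
        hC.lineMap_mem (u x).2 (hhC k x) (hχ01 x)⟩
      continuous_toFun := by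
        refine Continuous.subtype_mk ?_ _
        simp only [AffineMap.lineMap_apply_module']
        exact (χ.contMDiff.continuous.smul ((h k).contMDiff.continuous.sub hu)).add hu }
  refine ⟨g, ContinuousMap.tendsto_of_forall_dist_lt tendsto_one_div_add_atTop_nhds_zero_nat
    fun k x => ?_, ⟨A ∪ O, hA.union hO, sdiff_subset_iff.1 hLAO, fun k => ?_⟩, fun k x hx => ?_⟩
  · calc dist (g k x) (u x) = ‖χ x‖ * dist (u x : F) (h k x) := dist_lineMap_left _ _ _
      _ ≤ dist (h k x) (u x) := by
        rw [dist_comm, Real.norm_of_nonneg (hχ01 x).1]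
        exact mul_le_of_le_one_left dist_nonneg (hχ01 x).2
      _ < 1 / (k + 1) := hhu k x
  · refine (contMDiffOn_union_iff_of_isOpen hA hO).2 ⟨?_, ?_⟩
    · exact huA.lineMap (h k).contMDiff.contMDiffOn χ.contMDiff.contMDiffOn
    · refine (h k).contMDiff.contMDiffOn.congr fun x hx => ?_
      simp [g, hχO x hx]
  · exact Subtype.ext (by simp [g, hχ0 x hx])

end

theorem smooth_relative_approx_convex_chart_general
    {EB : Type*} [NormedAddCommGroup EB] [NormedSpace ℝ EB] [FiniteDimensional ℝ EB]
    {HB : Type*} [TopologicalSpace HB] {IB : ModelWithCorners ℝ EB HB}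
    {M : Type*} [TopologicalSpace M] [ChartedSpace HB M] [IsManifold IB (⊤ : ℕ∞) M]
    [SigmaCompactSpace M] [T2Space M]
    {EN : Type*} [NormedAddCommGroup EN] [NormedSpace ℝ EN]
    {HN : Type*} [TopologicalSpace HN] {IN : ModelWithCorners ℝ EN HN}
    {N : Type*} [TopologicalSpace N] [ChartedSpace HN N]
    {W : Set N}
    (hdiffeo : ∃ C : Set EN, IsOpen C ∧ Convex ℝ C ∧
      ∃ (φ : N → EN) (ψ : EN → N),
        ContMDiffOn IN 𝓘(ℝ, EN) (⊤ : ℕ∞) φ W ∧ ContMDiffOn 𝓘(ℝ, EN) IN (⊤ : ℕ∞) ψ C ∧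
        (∀ x ∈ W, φ x ∈ C) ∧ (∀ y ∈ C, ψ y ∈ W) ∧
        (∀ x ∈ W, ψ (φ x) = x) ∧ (∀ y ∈ C, φ (ψ y) = y))
    (f : C(M, W))
    {L : Set M} (hL : IsClosed L) {U : Set M} (hU : IsOpen U)
    (hfsm : ∃ A : Set M, IsOpen A ∧ L \ U ⊆ A ∧
      ContMDiffOn IB IN (⊤ : ℕ∞) (fun x => (f x : N)) A) :
    ∀ Nf ∈ nhds f, ∃ g : C(M, W), g ∈ Nf ∧
      (∃ V : Set M, IsOpen V ∧ L ⊆ V ∧ ContMDiffOn IB IN (⊤ : ℕ∞) (fun x => (g x : N)) V) ∧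
      (∀ x, x ∉ U → g x = f x) := by
  obtain ⟨C, -, hC, φ, ψ, hφ, hψ, hφC, hψW, hψφ, -⟩ := hdiffeo
  obtain ⟨A, hA, hLUA, hfA⟩ := hfsm
  intro Nf hNf
  let u : C(M, C) := ⟨fun x => ⟨φ (f x), hφC _ (f x).2⟩,
    (hφ.continuousOn.comp_continuous (continuous_subtype_val.comp f.continuous)
      fun x => (f x).2).subtype_mk _⟩
  let Ψ : C(C, W) := ⟨fun y => ⟨ψ y, hψW y y.2⟩,
    (hψ.continuousOn.comp_continuous continuous_subtype_val Subtype.property).subtype_mk _⟩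
  have hΨu : Ψ.comp u = f := ContinuousMap.ext fun x => Subtype.ext (hψφ _ (f x).2)
  obtain ⟨g, hgu, ⟨V, hV, hLV, hgV⟩, hgU⟩ := exists_seq_tendsto_contMDiffOn_nhds_eq_off_of_convex
    hC u hL hU hA (sdiff_subset_comm.1 hLUA) (hφ.comp hfA fun x _ => (f x).2)
  have hΨg : ∀ᶠ k in atTop, Ψ.comp (g k) ∈ Nf :=
    (ContinuousMap.continuous_postcomp Ψ).tendsto u |>.comp hgu |>.eventually_mem (hΨu ▸ hNf)
  obtain ⟨k, hk⟩ := hΨg.exists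
  refine ⟨Ψ.comp (g k), hk, ⟨V, hV, hLV, hψ.comp (hgV k) fun x _ => (g k x).2⟩, fun x hx => ?_⟩
  rw [← hΨu, ContinuousMap.comp_apply, ContinuousMap.comp_apply, hgU k x hx]

/-- Relative smoothing for maps into an open subset `W` of a manifold `N` that is
diffeomorphic to an open convex subset of the model space of `N`. -/
theorem smooth_relative_approx_convex_chart
    {EB : Type*} [NormedAddCommGroup EB] [NormedSpace ℝ EB] [FiniteDimensional ℝ EB]
    {HB : Type*} [TopologicalSpace HB] {IB : ModelWithCorners ℝ EB HB}
    {M : Type*} [TopologicalSpace M] [ChartedSpace HB M] [IsManifold IB (⊤ : ℕ∞) M]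
    [SigmaCompactSpace M] [SecondCountableTopology M] [T2Space M]
    {EN : Type*} [NormedAddCommGroup EN] [NormedSpace ℝ EN]
    {HN : Type*} [TopologicalSpace HN] {IN : ModelWithCorners ℝ EN HN}
    {N : Type*} [TopologicalSpace N] [ChartedSpace HN N] [IsManifold IN (⊤ : ℕ∞) N]
    {W : Set N} (hWopen : IsOpen W)
    (hdiffeo : ∃ C : Set EN, IsOpen C ∧ Convex ℝ C ∧
      ∃ (φ : N → EN) (ψ : EN → N),
        ContMDiffOn IN 𝓘(ℝ, EN) (⊤ : ℕ∞) φ W ∧ ContMDiffOn 𝓘(ℝ, EN) IN (⊤ : ℕ∞) ψ C ∧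
        (∀ x ∈ W, φ x ∈ C) ∧ (∀ y ∈ C, ψ y ∈ W) ∧
        (∀ x ∈ W, ψ (φ x) = x) ∧ (∀ y ∈ C, φ (ψ y) = y))
    (f : C(M, W))
    {L : Set M} (hL : IsClosed L) {U : Set M} (hU : IsOpen U)
    (hfsm : ∃ A : Set M, IsOpen A ∧ L \ U ⊆ A ∧
      ContMDiffOn IB IN (⊤ : ℕ∞) (fun x => (f x : N)) A) :
    ∀ Nf ∈ nhds f, ∃ g : C(M, W), g ∈ Nf ∧
      (∃ V : Set M, IsOpen V ∧ L ⊆ V ∧ ContMDiffOn IB IN (⊤ : ℕ∞) (fun x => (g x : N)) V) ∧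
      (∀ x, x ∉ U → g x = f x) :=
  smooth_relative_approx_convex_chart_general hdiffeo f hL hU hfsm
end

section
/- Let π : E → M be a smooth fiber bundle with typical fibre N, let x₀ ∈ M, and let σ : M → E be a continuous section of π. Then there exist an open neighbourhood V of x₀ in M and a continuous homotopy G : [0,1] × M → E such that G(0,·) = σ, G(t,·) is a section of π for every t ∈ [0,1], G(t, x₀) = σ(x₀) for all t ∈ [0,1], and the section G(1,·) is, in a smooth local trivialisation around x₀, constantly equal to the fibre value of σ(x₀) on V; in particular σ is base-point-preservingly homotopic through sections to a section that is smooth on a neighbourhood of x₀. -/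
/-! In the chart at `x₀`, push points along straight lines towards `x₀` (the range of a model with
corners is convex), damped by a bump function so that nothing moves outside a compact ball and a
smaller ball is collapsed onto `x₀` at time `1`. Reading off the fibre coordinate of `σ`, in a
trivialisation near `x₀`, at the moved point gives a homotopy of sections; it agrees with `σ`
wherever the base point does not move, so it extends by `σ` to all of `M`. -/

open Set Function
open scoped Manifold

/-- A surjective smooth map `proj : E → M` is a smooth fiber bundle with typical fibre `N`
if around every point of the base there is a smooth local trivialisation compatible with
`proj`. -/
def IsSmoothFiberBundle
    {EB : Type*} [NormedAddCommGroup EB] [NormedSpace ℝ EB]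
    {HB : Type*} [TopologicalSpace HB] (IB : ModelWithCorners ℝ EB HB)
    {M : Type*} [TopologicalSpace M] [ChartedSpace HB M]
    {EN : Type*} [NormedAddCommGroup EN] [NormedSpace ℝ EN]
    {HN : Type*} [TopologicalSpace HN] (IN : ModelWithCorners ℝ EN HN)
    (N : Type*) [TopologicalSpace N] [ChartedSpace HN N]
    {EE : Type*} [NormedAddCommGroup EE] [NormedSpace ℝ EE]
    {HE : Type*} [TopologicalSpace HE] (IE : ModelWithCorners ℝ EE HE)
    {E : Type*} [TopologicalSpace E] [ChartedSpace HE E]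
    (proj : E → M) : Prop :=
  Surjective proj ∧ ContMDiff IE IB (⊤ : ℕ∞) proj ∧
    ∀ x : M, ∃ S : Set M, IsOpen S ∧ x ∈ S ∧
      ∃ (φ : E → M × N) (ψ : M × N → E),
        ContMDiffOn IE (IB.prod IN) (⊤ : ℕ∞) φ (proj ⁻¹' S) ∧
        ContMDiffOn (IB.prod IN) IE (⊤ : ℕ∞) ψ (S ×ˢ (univ : Set N)) ∧
        (∀ e ∈ proj ⁻¹' S, (φ e).1 = proj e ∧ ψ (φ e) = e) ∧
        (∀ p ∈ S ×ˢ (univ : Set N), proj (ψ p) = p.1 ∧ φ (ψ p) = p)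

open Metric Topology Filter AffineMap

theorem continuous_piecewise_of_eqOn_diff {X Y : Type*} [TopologicalSpace X] [TopologicalSpace Y]
    {U D : Set X} [∀ x, Decidable (x ∈ U)] {f g : X → Y} (hU : IsOpen U) (hD : IsClosed D)
    (hDU : D ⊆ U) (hf : ContinuousOn f U) (hg : Continuous g) (hfg : EqOn f g (U \ D)) :
    Continuous (U.piecewise f g) := by
  have hcover : U ∪ Dᶜ = univ :=
    eq_univ_of_forall fun x => (em (x ∈ U)).imp id fun hx hxD => hx (hDU hxD)
  rw [← continuousOn_univ, ← hcover]
  refine (hf.congr fun x hx => piecewise_eq_of_mem _ _ _ hx).union_of_isOpen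
    (hg.continuousOn.congr fun x hx => ?_) hU hD.isOpen_compl
  by_cases hxU : x ∈ U
  · rw [piecewise_eq_of_mem _ _ _ hxU]
    exact hfg ⟨hxU, hx⟩
  · exact piecewise_eq_of_notMem _ _ _ hxU

structure LocalContraction {M : Type*} [TopologicalSpace M] (x₀ : M) (U : Set M) where
  domain : Set M
  support : Set M
  collapsed : Set M
  toFun : Icc (0 : ℝ) 1 × M → M
  isOpen_domain : IsOpen domain
  domain_subset : domain ⊆ U
  isClosed_support : IsClosed support
  support_subset : support ⊆ domain
  isOpen_collapsed : IsOpen collapsed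
  mem_collapsed : x₀ ∈ collapsed
  collapsed_subset : collapsed ⊆ domain
  continuousOn : ContinuousOn toFun (Prod.snd ⁻¹' domain)
  mapsTo : MapsTo toFun (Prod.snd ⁻¹' domain) domain
  apply_zero : ∀ x ∈ domain, toFun (0, x) = x
  apply_basepoint : ∀ t, toFun (t, x₀) = x₀
  apply_of_notMem_support : ∀ t, ∀ x ∈ domain \ support, toFun (t, x) = x
  apply_one : ∀ x ∈ collapsed, toFun (1, x) = x₀

section Chart

variable {EB : Type*} [NormedAddCommGroup EB] [NormedSpace ℝ EB]
  {HB : Type*} [TopologicalSpace HB]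
  {M : Type*} [TopologicalSpace M] [ChartedSpace HB M]

theorem exists_ball_inter_range_subset_extChartAt (IB : ModelWithCorners ℝ EB HB) {x₀ : M}
    {U : Set M} (hU : U ∈ 𝓝 x₀) :
    ∃ r > 0, ball (extChartAt IB x₀ x₀) r ∩ range IB ⊆
      (extChartAt IB x₀).target ∩ (extChartAt IB x₀).symm ⁻¹' U :=
  mem_nhdsWithin_iff.mp <| inter_mem (extChartAt_target_mem_nhdsWithin x₀)
    (mem_nhdsWithin_of_mem_nhds (extChartAt_preimage_mem_nhds hU))

theorem LocalContraction.nonempty [T2Space M] [FiniteDimensional ℝ EB]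
    (IB : ModelWithCorners ℝ EB HB) {x₀ : M} {U : Set M} (hU : U ∈ 𝓝 x₀) :
    Nonempty (LocalContraction x₀ U) := by
  set e := extChartAt IB x₀
  obtain ⟨r, hr, hsub⟩ := exists_ball_inter_range_subset_extChartAt IB hU
  let β : ContDiffBump (e x₀) := ⟨r / 4, r / 2, by positivity, by linarith⟩
  set B := ball (e x₀) r ∩ range IB
  set W := e.source ∩ e ⁻¹' ball (e x₀) r
  let H : Icc (0 : ℝ) 1 × M → M := fun p => e.symm (lineMap (e p.2) (e x₀) (p.1 * β (e p.2)))
  have he_mem : ∀ x ∈ W, e x ∈ B := fun x hx => ⟨hx.2, mem_range_self _⟩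
  have hsymm_mem : ∀ y ∈ B, e.symm y ∈ W := fun y hy =>
    ⟨e.map_target (hsub hy).1, by simpa [e.right_inv (hsub hy).1] using hy.1⟩
  have hline_mem : ∀ p : Icc (0 : ℝ) 1 × M, p.2 ∈ W →
      lineMap (e p.2) (e x₀) (p.1 * β (e p.2)) ∈ B :=
    fun p hp => ((convex_ball _ _).inter IB.convex_range).lineMap_mem (he_mem _ hp)
      ⟨mem_ball_self hr, mem_range_self _⟩
      ⟨mul_nonneg p.1.2.1 β.nonneg, mul_le_one₀ p.1.2.2 β.nonneg β.le_one⟩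
  have hK : closedBall (e x₀) (r / 2) ∩ range IB ⊆ B :=
    inter_subset_inter_left _ (closedBall_subset_ball (by linarith))
  have he_cont : ContinuousOn (fun p : Icc (0 : ℝ) 1 × M => e p.2) (Prod.snd ⁻¹' W) :=
    (continuousOn_extChartAt x₀).comp continuous_snd.continuousOn fun p hp => hp.1
  refine ⟨{
    domain := W
    support := e.symm '' (closedBall (e x₀) (r / 2) ∩ range IB)
    collapsed := e.source ∩ e ⁻¹' ball (e x₀) (r / 4)
    toFun := H
    isOpen_domain := isOpen_extChartAt_preimage' x₀ isOpen_ball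
    domain_subset := fun x hx => e.left_inv hx.1 ▸ (hsub (he_mem x hx)).2
    isClosed_support :=
      ((isCompact_closedBall _ _).inter_right IB.isClosed_range).image_of_continuousOn
        ((continuousOn_extChartAt_symm x₀).mono fun y hy => (hsub (hK hy)).1) |>.isClosed
    support_subset := image_subset_iff.mpr fun y hy => hsymm_mem y (hK hy)
    isOpen_collapsed := isOpen_extChartAt_preimage' x₀ isOpen_ball
    mem_collapsed := ⟨mem_extChartAt_source x₀, mem_ball_self (by positivity)⟩
    collapsed_subset := inter_subset_inter_right _ (preimage_mono (ball_subset_ball (by linarith)))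
    continuousOn := (continuousOn_extChartAt_symm x₀).comp
      (he_cont.lineMap continuousOn_const
        ((continuous_subtype_val.comp continuous_fst).continuousOn.mul
          (β.continuous.comp_continuousOn he_cont)))
      fun p hp => (hsub (hline_mem p hp)).1
    mapsTo := fun p hp => hsymm_mem _ (hline_mem p hp)
    apply_zero := fun x hx => by
      simp only [H, Icc.coe_zero, zero_mul, lineMap_apply_zero, e.left_inv hx.1]
    apply_basepoint := fun t => by simp only [H, lineMap_same_apply, e, extChartAt_to_inv]
    apply_of_notMem_support := fun t x ⟨hxW, hxD⟩ => by
      have hfar : r / 2 ≤ dist (e x) (e x₀) := by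
        by_contra! h
        exact hxD ⟨e x, ⟨mem_closedBall.mpr h.le, mem_range_self _⟩, e.left_inv hxW.1⟩
      simp only [H, β.zero_of_le_dist hfar, mul_zero, lineMap_apply_zero, e.left_inv hxW.1]
    apply_one := fun x hx => by
      simp only [H, Icc.coe_one, one_mul, β.one_of_mem_closedBall (ball_subset_closedBall hx.2),
        lineMap_apply_one, e, extChartAt_to_inv] }⟩

end Chart

section Bundle

variable {M E N : Type*} {proj : E → M} {S : Set M} {φ : E → M × N} {ψ : M × N → E} {σ : M → E}

theorem trivialization_symm_mk_snd_of_section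
    (hφψ : ∀ e ∈ proj ⁻¹' S, (φ e).1 = proj e ∧ ψ (φ e) = e) (hσs : ∀ x, proj (σ x) = x)
    {x : M} (hx : x ∈ S) : ψ (x, (φ (σ x)).2) = σ x := by
  obtain ⟨hfst, hleft⟩ := hφψ (σ x) (by rwa [mem_preimage, hσs])
  have hpair : (x, (φ (σ x)).2) = φ (σ x) := Prod.ext (by rw [hfst, hσs]) rfl
  rw [hpair, hleft]

variable [TopologicalSpace M] [TopologicalSpace E] [TopologicalSpace N]

theorem LocalContraction.exists_section_homotopy {x₀ : M} (C : LocalContraction x₀ S)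
    (hφ : ContinuousOn φ (proj ⁻¹' S)) (hψ : ContinuousOn ψ (S ×ˢ univ))
    (hφψ : ∀ e ∈ proj ⁻¹' S, (φ e).1 = proj e ∧ ψ (φ e) = e)
    (hprojψ : ∀ p ∈ S ×ˢ (univ : Set N), proj (ψ p) = p.1)
    (hσc : Continuous σ) (hσs : ∀ x, proj (σ x) = x) :
    ∃ G : Icc (0 : ℝ) 1 × M → E, Continuous G ∧
      (∀ x, G (0, x) = σ x) ∧
      (∀ t x, proj (G (t, x)) = x) ∧
      (∀ t, G (t, x₀) = σ x₀) ∧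
      (∀ x ∈ C.collapsed, G (1, x) = ψ (x, (φ (σ x₀)).2)) := by
  classical
  set G := (Prod.snd ⁻¹' C.domain).piecewise (fun p => ψ (p.2, (φ (σ (C.toFun p))).2))
    (σ ∘ Prod.snd)
  have hG_in : ∀ p : Icc (0 : ℝ) 1 × M, p.2 ∈ C.domain →
      G p = ψ (p.2, (φ (σ (C.toFun p))).2) :=
    fun p hp => piecewise_eq_of_mem _ _ _ hp
  have hG_out : ∀ p : Icc (0 : ℝ) 1 × M, p.2 ∉ C.domain → G p = σ p.2 :=
    fun p hp => piecewise_eq_of_notMem _ _ _ hp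
  refine ⟨G, ?_, fun x => ?_, fun t x => ?_, fun t => ?_, fun x hx => ?_⟩
  · refine continuous_piecewise_of_eqOn_diff (C.isOpen_domain.preimage continuous_snd)
      (C.isClosed_support.preimage continuous_snd) (preimage_mono C.support_subset) ?_
      (hσc.comp continuous_snd) fun p ⟨hp, hpD⟩ => ?_
    · refine hψ.comp (continuous_snd.continuousOn.prodMk (continuous_snd.comp_continuousOn
        (hφ.comp (hσc.comp_continuousOn C.continuousOn) fun p hp => ?_)))
        fun p hp => ⟨C.domain_subset hp, mem_univ _⟩
      rw [mem_preimage, hσs]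
      exact C.domain_subset (C.mapsTo hp)
    · rw [Function.comp_apply, C.apply_of_notMem_support p.1 p.2 ⟨hp, hpD⟩]
      exact trivialization_symm_mk_snd_of_section hφψ hσs (C.domain_subset hp)
  · by_cases hx : x ∈ C.domain
    · rw [hG_in _ hx, C.apply_zero x hx]
      exact trivialization_symm_mk_snd_of_section hφψ hσs (C.domain_subset hx)
    · exact hG_out _ hx
  · by_cases hx : x ∈ C.domain
    · rw [hG_in _ hx]
      exact hprojψ _ ⟨C.domain_subset hx, mem_univ _⟩
    · rw [hG_out _ hx, hσs]
  · have hx₀ := C.collapsed_subset C.mem_collapsed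
    rw [hG_in _ hx₀, C.apply_basepoint]
    exact trivialization_symm_mk_snd_of_section hφψ hσs (C.domain_subset hx₀)
  · rw [hG_in _ (C.collapsed_subset hx), C.apply_one x hx]

end Bundle

theorem continuous_section_homotopic_to_locally_constant_section_general
    {EB : Type*} [NormedAddCommGroup EB] [NormedSpace ℝ EB] [FiniteDimensional ℝ EB]
    {HB : Type*} [TopologicalSpace HB] {IB : ModelWithCorners ℝ EB HB}
    {M : Type*} [TopologicalSpace M] [ChartedSpace HB M] [T2Space M]
    {EN : Type*} [NormedAddCommGroup EN] [NormedSpace ℝ EN]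
    {HN : Type*} [TopologicalSpace HN] {IN : ModelWithCorners ℝ EN HN}
    {N : Type*} [TopologicalSpace N] [ChartedSpace HN N]
    {EE : Type*} [NormedAddCommGroup EE] [NormedSpace ℝ EE]
    {HE : Type*} [TopologicalSpace HE] {IE : ModelWithCorners ℝ EE HE}
    {E : Type*} [TopologicalSpace E] [ChartedSpace HE E]
    (proj : E → M) (hbundle : IsSmoothFiberBundle IB IN N IE proj)
    (x₀ : M)
    (σ : M → E) (hσc : Continuous σ) (hσs : ∀ x, proj (σ x) = x) :
    ∃ (S : Set M) (φ : E → M × N) (ψ : M × N → E), IsOpen S ∧ x₀ ∈ S ∧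
      ContMDiffOn IE (IB.prod IN) (⊤ : ℕ∞) φ (proj ⁻¹' S) ∧
      ContMDiffOn (IB.prod IN) IE (⊤ : ℕ∞) ψ (S ×ˢ (univ : Set N)) ∧
      (∀ e ∈ proj ⁻¹' S, (φ e).1 = proj e ∧ ψ (φ e) = e) ∧
      (∀ p ∈ S ×ˢ (univ : Set N), proj (ψ p) = p.1 ∧ φ (ψ p) = p) ∧
      ∃ V : Set M, IsOpen V ∧ x₀ ∈ V ∧ V ⊆ S ∧
        ∃ G : Set.Icc (0:ℝ) 1 × M → E, Continuous G ∧
          (∀ x, G ((⟨0, left_mem_Icc.mpr zero_le_one⟩ : Set.Icc (0:ℝ) 1), x) = σ x) ∧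
          (∀ t x, proj (G (t, x)) = x) ∧
          (∀ t, G (t, x₀) = σ x₀) ∧
          (∀ x ∈ V, G ((⟨1, right_mem_Icc.mpr zero_le_one⟩ : Set.Icc (0:ℝ) 1), x) = ψ (x, (φ (σ x₀)).2)) := by
  obtain ⟨-, -, htriv⟩ := hbundle
  obtain ⟨S, hS, hx₀S, φ, ψ, hφ, hψ, hφψ, hψφ⟩ := htriv x₀
  obtain ⟨C⟩ := LocalContraction.nonempty IB (hS.mem_nhds hx₀S)
  exact ⟨S, φ, ψ, hS, hx₀S, hφ, hψ, hφψ, hψφ, C.collapsed, C.isOpen_collapsed, C.mem_collapsed,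
    C.collapsed_subset.trans C.domain_subset,
    C.exists_section_homotopy hφ.continuousOn hψ.continuousOn hφψ (fun p hp => (hψφ p hp).1)
      hσc hσs⟩

/-- A continuous section is base-point-preservingly homotopic, through sections, to a
section that is constant (in a smooth local trivialisation around `x₀`) on a neighbourhood
`V` of `x₀`, with fibre value that of `σ x₀`. -/
theorem continuous_section_homotopic_to_locally_constant_section
    {EB : Type*} [NormedAddCommGroup EB] [NormedSpace ℝ EB] [FiniteDimensional ℝ EB]
    {HB : Type*} [TopologicalSpace HB] {IB : ModelWithCorners ℝ EB HB}
    {M : Type*} [TopologicalSpace M] [ChartedSpace HB M] [IsManifold IB (⊤ : ℕ∞) M]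
    [ConnectedSpace M] [SecondCountableTopology M] [T2Space M]
    {EN : Type*} [NormedAddCommGroup EN] [NormedSpace ℝ EN]
    {HN : Type*} [TopologicalSpace HN] {IN : ModelWithCorners ℝ EN HN}
    {N : Type*} [TopologicalSpace N] [ChartedSpace HN N] [IsManifold IN (⊤ : ℕ∞) N]
    {EE : Type*} [NormedAddCommGroup EE] [NormedSpace ℝ EE]
    {HE : Type*} [TopologicalSpace HE] {IE : ModelWithCorners ℝ EE HE}
    {E : Type*} [TopologicalSpace E] [ChartedSpace HE E] [IsManifold IE (⊤ : ℕ∞) E]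
    (proj : E → M) (hbundle : IsSmoothFiberBundle IB IN N IE proj)
    (x₀ : M)
    (σ : M → E) (hσc : Continuous σ) (hσs : ∀ x, proj (σ x) = x) :
    ∃ (S : Set M) (φ : E → M × N) (ψ : M × N → E), IsOpen S ∧ x₀ ∈ S ∧
      ContMDiffOn IE (IB.prod IN) (⊤ : ℕ∞) φ (proj ⁻¹' S) ∧
      ContMDiffOn (IB.prod IN) IE (⊤ : ℕ∞) ψ (S ×ˢ (univ : Set N)) ∧
      (∀ e ∈ proj ⁻¹' S, (φ e).1 = proj e ∧ ψ (φ e) = e) ∧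
      (∀ p ∈ S ×ˢ (univ : Set N), proj (ψ p) = p.1 ∧ φ (ψ p) = p) ∧
      ∃ V : Set M, IsOpen V ∧ x₀ ∈ V ∧ V ⊆ S ∧
        ∃ G : Set.Icc (0:ℝ) 1 × M → E, Continuous G ∧
          (∀ x, G ((⟨0, left_mem_Icc.mpr zero_le_one⟩ : Set.Icc (0:ℝ) 1), x) = σ x) ∧
          (∀ t x, proj (G (t, x)) = x) ∧
          (∀ t, G (t, x₀) = σ x₀) ∧
          (∀ x ∈ V, G ((⟨1, right_mem_Icc.mpr zero_le_one⟩ : Set.Icc (0:ℝ) 1), x) = ψ (x, (φ (σ x₀)).2)) :=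
  continuous_section_homotopic_to_locally_constant_section_general proj hbundle x₀ σ hσc hσs
end
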